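/- If 0 < c < π/2, then for every θ ∈ (−1, 1) the derivative of the controller map satisfies −π·v̄/(2·c) ≤ υ'(θ) < −2·v̄·c/π, and the value −π·v̄/(2·c) is attained at θ = 0. -/

import Mathlib

open Real

lemma controller_hasDerivAt (vbar c θ : ℝ) (hc : 0 < c) (hθ : θ ∈ Set.Ioo (-1 : ℝ) 1) :
    HasDerivAt (fun x : ℝ => -(2 * vbar / π) * Real.arctan (π / (2 * c) * Real.tan (π / 2 * x)))
      (-(2 * vbar / π) * (1 / (1 + (π / (2 * c) * Real.tan (π / 2 * θ)) ^ 2) *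
        (π / (2 * c) * (1 / Real.cos (π / 2 * θ) ^ 2 * (π / 2))))) θ := by
  have hπ := Real.pi_pos
  have hcos : Real.cos (π / 2 * θ) ≠ 0 := by
    have : 0 < Real.cos (π / 2 * θ) := by
      apply Real.cos_pos_of_mem_Ioo
      constructor <;> nlinarith [hθ.1, hθ.2]
    linarith
  have h1 : HasDerivAt (fun x : ℝ => π / 2 * x) (π / 2) θ := by
    simpa using (hasDerivAt_id θ).const_mul (π / 2)
  have h3 : HasDerivAt (fun x : ℝ => Real.tan (π / 2 * x))
      (1 / Real.cos (π / 2 * θ) ^ 2 * (π / 2)) θ :=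
    (Real.hasDerivAt_tan hcos).comp θ h1
  have h4 := h3.const_mul (π / (2 * c))
  have h5 := (Real.hasDerivAt_arctan (π / (2 * c) * Real.tan (π / 2 * θ))).comp θ h4
  have h6 := h5.const_mul (-(2 * vbar / π))
  exact h6

/-- If `0 < c < π/2`, then for every `θ ∈ (−1, 1)` the derivative of
the controller map `υ(θ) = −(2·v̄/π)·arctan((π/(2·c))·tan((π/2)·θ))` (with `v̄ > 0`)
satisfies `−π·v̄/(2·c) ≤ υ'(θ) < −2·v̄·c/π`, and the value `−π·v̄/(2·c)` is attained
at `θ = 0`. -/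
theorem controller_map_deriv_range_small_c (vbar c : ℝ) (hv : 0 < vbar)
    (hc : 0 < c) (hcπ : c < π / 2) :
    (∀ θ ∈ Set.Ioo (-1 : ℝ) 1,
      -(π * vbar / (2 * c)) ≤
        deriv (fun x : ℝ => -(2 * vbar / π) * Real.arctan (π / (2 * c) * Real.tan (π / 2 * x))) θ ∧
      deriv (fun x : ℝ => -(2 * vbar / π) * Real.arctan (π / (2 * c) * Real.tan (π / 2 * x))) θ
        < -(2 * vbar * c / π)) ∧
    deriv (fun x : ℝ => -(2 * vbar / π) * Real.arctan (π / (2 * c) * Real.tan (π / 2 * x))) 0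
      = -(π * vbar / (2 * c)) := by
  have hπ := Real.pi_pos
  have main : ∀ θ ∈ Set.Ioo (-1 : ℝ) 1,
      -(π * vbar / (2 * c)) ≤
        deriv (fun x : ℝ => -(2 * vbar / π) * Real.arctan (π / (2 * c) * Real.tan (π / 2 * x))) θ ∧
      deriv (fun x : ℝ => -(2 * vbar / π) * Real.arctan (π / (2 * c) * Real.tan (π / 2 * x))) θ
        < -(2 * vbar * c / π) := by
    intro θ hθ
    have hcos : 0 < Real.cos (π / 2 * θ) := by
      apply Real.cos_pos_of_mem_Ioo
      constructor <;> nlinarith [hθ.1, hθ.2]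
    have hd := (controller_hasDerivAt vbar c θ hc hθ).deriv
    rw [hd]
    set t := Real.tan (π / 2 * θ) with ht
    set k := π / (2 * c) with hk
    have hk1 : 1 < k := by
      rw [hk, lt_div_iff₀ (by linarith)]
      linarith
    have hcos2 : 1 / Real.cos (π / 2 * θ) ^ 2 = 1 + t ^ 2 := by
      rw [one_div, ← Real.inv_one_add_tan_sq hcos.ne', inv_inv]
    rw [hcos2]
    have hden : 0 < 1 + (k * t) ^ 2 := by positivity
    have hval : -(2 * vbar / π) * (1 / (1 + (k * t) ^ 2) * (k * ((1 + t ^ 2) * (π / 2))))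
        = -(vbar * k * (1 + t ^ 2) / (1 + (k * t) ^ 2)) := by
      field_simp
    rw [hval]
    constructor
    · have h1 : vbar * k * (1 + t ^ 2) / (1 + (k * t) ^ 2) ≤ vbar * k := by
        rw [div_le_iff₀ hden]
        have hk0 : 0 < k := by linarith
        have hk2 : 1 ≤ k ^ 2 := by nlinarith
        nlinarith [mul_nonneg (mul_nonneg (mul_pos hv hk0).le (sq_nonneg t)) (sub_nonneg.mpr hk2)]
      have h2 : π * vbar / (2 * c) = vbar * k := by
        rw [hk]; field_simp
      rw [h2]
      linarith
    · have h2 : (2 : ℝ) * vbar * c / π = vbar / k := by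
        rw [hk]; field_simp
      rw [h2, neg_lt_neg_iff, div_lt_div_iff₀ (by linarith) hden]
      have hk2 : 1 < k ^ 2 := by nlinarith
      nlinarith [mul_pos hv (sub_pos.mpr hk2), sq_nonneg t]
  refine ⟨main, ?_⟩
  have h0 : (0 : ℝ) ∈ Set.Ioo (-1 : ℝ) 1 := by constructor <;> norm_num
  have hd := (controller_hasDerivAt vbar c 0 hc h0).deriv
  rw [hd]
  simp [Real.tan_zero, Real.cos_zero]
  field_simp
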